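/- If ξ is a standard Gaussian vector in R^p, then for every x > 0, P(‖ξ‖² > p + max(√(κ·x·p), κ·x)) ≤ exp(-x), where κ = 6.6. -/

import Mathlib

open MeasureTheory ProbabilityTheory Real
open scoped NNReal ENNReal

lemma key_log_ineq {u : ℝ} (hu0 : 0 ≤ u) (hu1 : u ≤ 1) :
    Real.log (1 + u) ≤ u - (10/33) * u ^ 2 := by
  have hz : 0 ≤ u - (10/33) * u ^ 2 := by nlinarith
  rw [Real.log_le_iff_le_exp (by linarith)]
  have h5 := Real.sum_le_exp_of_nonneg hz 5
  have hsum : ∑ i ∈ Finset.range 5, (u - (10/33) * u ^ 2) ^ i / (Nat.factorial i) =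
      1 + (u - (10/33) * u ^ 2) + (u - (10/33) * u ^ 2)^2/2 + (u - (10/33) * u ^ 2)^3/6
      + (u - (10/33) * u ^ 2)^4/24 := by
    simp [Finset.sum_range_succ, Nat.factorial]
  rw [hsum] at h5
  refine le_trans ?_ h5
  have h1u : (0:ℝ) ≤ 1 - u := by linarith
  have c0 : (0:ℝ) ≤ u^2*(1-u)^6 := by positivity
  have c1 : (0:ℝ) ≤ u^3*(1-u)^5 := by positivity
  have c2 : (0:ℝ) ≤ u^4*(1-u)^4 := by positivity
  have c3 : (0:ℝ) ≤ u^5*(1-u)^3 := by positivity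
  have c4 : (0:ℝ) ≤ u^6*(1-u)^2 := by positivity
  have c5 : (0:ℝ) ≤ u^7*(1-u) := by positivity
  have c6 : (0:ℝ) ≤ u^8 := by positivity
  nlinarith [c0,c1,c2,c3,c4,c5,c6]

lemma gauss_density :
    gaussianReal 0 1 = (volume : Measure ℝ).withDensity
      (fun y => ((Real.toNNReal (gaussianPDFReal 0 1 y) : ℝ≥0) : ℝ≥0∞)) := by
  rw [gaussianReal_of_var_ne_zero 0 one_ne_zero]
  rfl

lemma gauss_smul (l : ℝ) : ∀ y : ℝ,
    (Real.toNNReal (gaussianPDFReal 0 1 y) : ℝ≥0) • Real.exp (l * y ^ 2)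
      = (Real.sqrt (2 * π))⁻¹ * Real.exp (-(1/2 - l) * y ^ 2) := by
  intro y
  rw [NNReal.smul_def, smul_eq_mul, Real.coe_toNNReal _ (gaussianPDFReal_nonneg 0 1 y)]
  simp only [gaussianPDFReal, NNReal.coe_one, mul_one, sub_zero]
  rw [mul_assoc, ← Real.exp_add]
  ring_nf

lemma gauss_mgf (l : ℝ) (hl : 0 < 1 - 2 * l) :
    ∫ y, Real.exp (l * y ^ 2) ∂(gaussianReal 0 1) = (Real.sqrt (1 - 2*l))⁻¹ := by
  rw [gauss_density, integral_withDensity_eq_integral_smul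
    (measurable_gaussianPDFReal 0 1).real_toNNReal]
  simp_rw [gauss_smul l]
  rw [integral_const_mul, integral_gaussian]
  rw [← Real.sqrt_inv, ← Real.sqrt_mul (by positivity)]
  rw [show (2*π)⁻¹ * (π/(1/2-l)) = (1-2*l)⁻¹ by
    field_simp
    try trivial
    try tauto]
  exact Real.sqrt_inv _

lemma gauss_mgf_integrable (l : ℝ) (hl : 0 < 1 - 2 * l) :
    Integrable (fun y => Real.exp (l * y ^ 2)) (gaussianReal 0 1) := by
  rw [gauss_density, integrable_withDensity_iff_integrable_smul
    (measurable_gaussianPDFReal 0 1).real_toNNReal]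
  simp_rw [gauss_smul l]
  exact (integrable_exp_neg_mul_sq (by linarith)).const_mul _

lemma pi_mgf (p : ℕ) (l : ℝ) (hl : 0 < 1 - 2 * l) :
    ∫ y : Fin p → ℝ, Real.exp (l * ∑ i, y i ^ 2) ∂(Measure.pi fun _ => gaussianReal 0 1)
      = ((Real.sqrt (1 - 2*l))⁻¹) ^ p := by
  letI : MeasureSpace ℝ := ⟨gaussianReal 0 1⟩
  haveI : SigmaFinite (volume : Measure ℝ) :=
    (inferInstance : SigmaFinite (gaussianReal 0 1))
  have hvol : (volume : Measure (Fin p → ℝ)) = Measure.pi fun _ => gaussianReal 0 1 := rfl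
  rw [← hvol]
  have : ∀ y : Fin p → ℝ, Real.exp (l * ∑ i, y i ^ 2) = ∏ i, Real.exp (l * y i ^ 2) := by
    intro y
    rw [Finset.mul_sum, Real.exp_sum]
  simp_rw [this]
  rw [show (volume : Measure (Fin p → ℝ)) = Measure.pi fun _ => (volume : Measure ℝ) from rfl,
    integral_fintype_prod_eq_pow (ι := Fin p) (fun z : ℝ => Real.exp (l * z ^ 2))]
  rw [show (∫ z : ℝ, Real.exp (l * z ^ 2)) = (Real.sqrt (1 - 2*l))⁻¹ from gauss_mgf l hl]
  simp

lemma pi_mgf_integrable (p : ℕ) (l : ℝ) (hl : 0 < 1 - 2 * l) :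
    Integrable (fun y : Fin p → ℝ => Real.exp (l * ∑ i, y i ^ 2))
      (Measure.pi fun _ => gaussianReal 0 1) := by
  letI : MeasureSpace ℝ := ⟨gaussianReal 0 1⟩
  haveI : SigmaFinite (volume : Measure ℝ) :=
    (inferInstance : SigmaFinite (gaussianReal 0 1))
  have hvol : (volume : Measure (Fin p → ℝ)) = Measure.pi fun _ => gaussianReal 0 1 := rfl
  rw [← hvol]
  have : ∀ y : Fin p → ℝ, Real.exp (l * ∑ i, y i ^ 2) = ∏ i, Real.exp (l * y i ^ 2) := by
    intro y
    rw [Finset.mul_sum, Real.exp_sum]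
  simp_rw [this]
  exact Integrable.fintype_prod (fun i => gauss_mgf_integrable l hl)

lemma chernoff_bound
    {Ω : Type*} [MeasureSpace Ω] (P : Measure Ω) [IsProbabilityMeasure P]
    {p : ℕ} (ξ : Ω → Fin p → ℝ) (hξ : Measurable ξ)
    (hlaw : Measure.map ξ P = Measure.pi fun _ : Fin p => gaussianReal 0 1)
    (l : ℝ) (hl0 : 0 < l) (hl : 0 < 1 - 2 * l) (t : ℝ) :
    P {ω | t ≤ ∑ i, ξ ω i ^ 2}
      ≤ ENNReal.ofReal (Real.exp (-l * t) * ((Real.sqrt (1 - 2*l))⁻¹) ^ p) := by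
  have hg : Measurable fun y : Fin p → ℝ => Real.exp (l * ∑ i, y i ^ 2) := by
    fun_prop
  have hint : Integrable (fun ω => Real.exp (l * ∑ i, ξ ω i ^ 2)) P := by
    have := (integrable_map_measure hg.aestronglyMeasurable hξ.aemeasurable).mp
      (by rw [hlaw]; exact pi_mgf_integrable p l hl)
    exact this
  have hmgf : mgf (fun ω => ∑ i, ξ ω i ^ 2) P l = ((Real.sqrt (1 - 2*l))⁻¹) ^ p := by
    rw [mgf]
    have : ∫ ω, Real.exp (l * ∑ i, ξ ω i ^ 2) ∂P
        = ∫ y : Fin p → ℝ, Real.exp (l * ∑ i, y i ^ 2) ∂(Measure.map ξ P) := by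
      rw [integral_map hξ.aemeasurable hg.aestronglyMeasurable]
    rw [this, hlaw, pi_mgf p l hl]
  have h := measure_ge_le_exp_mul_mgf (X := fun ω => ∑ i, ξ ω i ^ 2) (μ := P) t hl0.le hint
  rw [hmgf] at h
  calc P {ω | t ≤ ∑ i, ξ ω i ^ 2}
      = ENNReal.ofReal (P {ω | t ≤ ∑ i, ξ ω i ^ 2}).toReal :=
        (ENNReal.ofReal_toReal (measure_ne_top P _)).symm
    _ ≤ _ := ENNReal.ofReal_le_ofReal h

theorem gaussian_quadratic_deviation_quantile
    {Ω : Type*} [MeasureSpace Ω] (P : Measure Ω) [IsProbabilityMeasure P]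
    {p : ℕ} (hp : 0 < p) (ξ : Ω → Fin p → ℝ) (hξ : Measurable ξ)
    (hlaw : Measure.map ξ P = Measure.pi fun _ : Fin p => gaussianReal 0 1)
    (x : ℝ) (hx : 0 < x) :
    P {ω | (p : ℝ) + max (Real.sqrt (6.6 * x * p)) (6.6 * x) < ∑ i, ξ ω i ^ 2}
      ≤ ENNReal.ofReal (Real.exp (-x)) := by
  have hp' : (0:ℝ) < p := Nat.cast_pos.mpr hp
  set m := max (Real.sqrt (6.6 * x * p)) (6.6 * x) with hm
  set t := (p : ℝ) + m with ht
  have hsub : P {ω | t < ∑ i, ξ ω i ^ 2} ≤ P {ω | t ≤ ∑ i, ξ ω i ^ 2} :=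
    measure_mono (Set.setOf_subset_setOf.mpr (fun ω => le_of_lt))
  rcases le_total (p : ℝ) (6.6 * x) with hA | hB
  · -- case p ≤ 6.6 x : take l = 1/4
    have hmax : m = 6.6 * x := by
      rw [hm]
      refine max_eq_right ?_
      exact (Real.sqrt_le_sqrt (by nlinarith : 6.6 * x * (p:ℝ) ≤ (6.6*x)^2)).trans_eq
        (Real.sqrt_sq (by positivity))
    have hch := chernoff_bound P ξ hξ hlaw (1/4) (by norm_num) (by norm_num) t
    refine hsub.trans (hch.trans ?_)
    refine ENNReal.ofReal_le_ofReal ?_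
    have h12 : (1 : ℝ) - 2 * (1/4) = 1/2 := by norm_num
    have hpow : ((Real.sqrt (1 - 2*(1/4 : ℝ)))⁻¹) ^ p
        = Real.exp (p * (Real.log 2 / 2)) := by
      rw [h12]
      have hpos : (0:ℝ) < (Real.sqrt (1/2))⁻¹ := by positivity
      rw [← Real.exp_log (pow_pos hpos p), Real.log_pow]
      congr 1
      rw [Real.log_inv, Real.log_sqrt (by norm_num)]
      rw [show (1/2 : ℝ) = 2⁻¹ by norm_num, Real.log_inv]
      ring
    rw [hpow, ← Real.exp_add, Real.exp_le_exp]
    have hlog2 : Real.log 2 < 0.6931471808 := Real.log_two_lt_d9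
    have hlog2' : 0 < Real.log 2 := Real.log_pos (by norm_num)
    rw [ht, hmax]
    nlinarith [hp', hx]
  · -- case 6.6 x ≤ p
    set u := Real.sqrt (6.6 * x / p) with hu
    have hu2 : u ^ 2 = 6.6 * x / p := Real.sq_sqrt (by positivity)
    have hu0 : 0 < u := Real.sqrt_pos.mpr (by positivity)
    have hu1 : u ≤ 1 := by
      rw [hu]
      refine Real.sqrt_le_one.mpr ?_
      rw [div_le_one hp']
      linarith
    have hpu2 : (p:ℝ) * u ^ 2 = 6.6 * x := by
      rw [hu2]
      field_simp
    have hmax : m = (p:ℝ) * u := by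
      rw [hm]
      have hs : Real.sqrt (6.6 * x * p) = p * u := by
        rw [hu, show (6.6 * x * p : ℝ) = p^2 * (6.6 * x / p) by field_simp,
          Real.sqrt_mul (sq_nonneg _), Real.sqrt_sq hp'.le]
      rw [hs]
      refine max_eq_left ?_
      rw [← hs]
      calc (6.6*x : ℝ) = Real.sqrt ((6.6*x)^2) := (Real.sqrt_sq (by positivity)).symm
        _ ≤ Real.sqrt (6.6 * x * p) := Real.sqrt_le_sqrt (by nlinarith)
    set l := u / (2 * (1 + u)) with hldef
    have h2l : 1 - 2 * l = (1 + u)⁻¹ := by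
      rw [hldef]
      field_simp
      try ring
      try tauto
    have hl : 0 < 1 - 2 * l := by rw [h2l]; positivity
    have hl0 : 0 < l := by rw [hldef]; positivity
    have hch := chernoff_bound P ξ hξ hlaw l hl0 hl t
    refine hsub.trans (hch.trans ?_)
    refine ENNReal.ofReal_le_ofReal ?_
    have hpow : ((Real.sqrt (1 - 2*l))⁻¹) ^ p = Real.exp (p * (Real.log (1 + u) / 2)) := by
      rw [h2l, Real.sqrt_inv, inv_inv]
      have hpos : (0:ℝ) < Real.sqrt (1 + u) := Real.sqrt_pos.mpr (by linarith)
      rw [← Real.exp_log (pow_pos hpos p), Real.log_pow]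
      congr 1
      rw [Real.log_sqrt (by linarith)]
      try push_cast
      try ring
    rw [hpow, ← Real.exp_add, Real.exp_le_exp]
    have hlt : l * t = p * u / 2 := by
      rw [ht, hmax, hldef]
      field_simp
      try ring
    have hkey := key_log_ineq hu0.le hu1
    have hmul := mul_le_mul_of_nonneg_left hkey (by positivity : (0:ℝ) ≤ (p:ℝ)/2)
    nlinarith [hlt, hpu2, hmul]
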